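/- arXiv:2105.10635 — 2 statements merged into one kernel-verified Lean document; each statement's English description precedes it below -/
import Mathlib

section
/- As ε → ∞, the unique minimizer P_ε of the entropic regularized OT problem converges to the product coupling a bᵀ. -/
noncomputable def matEntropy {n m : ℕ} (P : Matrix (Fin n) (Fin m) ℝ) : ℝ :=
  -∑ i, ∑ j, P i j * Real.log (P i j)

def couplings {n m : ℕ} (a : Fin n → ℝ) (b : Fin m → ℝ) :
    Set (Matrix (Fin n) (Fin m) ℝ) :=
  {P | (∀ i j, 0 ≤ P i j) ∧ (∀ i, ∑ j, P i j = a i) ∧ (∀ j, ∑ i, P i j = b j)}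

lemma kl_quad (p q : ℝ) (hp0 : 0 ≤ p) (hp1 : p ≤ 1) (hq0 : 0 < q) (hq1 : q ≤ 1) :
    (p - q)^2 / 4 ≤ p * Real.log p - p * Real.log q - p + q := by
  rcases eq_or_lt_of_le hp0 with h0 | hp
  · rw [← h0]; simp; nlinarith
  · set m : ℝ := (p + q) / 2 with hm
    have hm0 : 0 < m := by positivity
    have h1 : Real.log (m / p) ≤ m / p - 1 := Real.log_le_sub_one_of_pos (by positivity)
    have h2 : Real.log (q / m) ≤ q / m - 1 := Real.log_le_sub_one_of_pos (by positivity)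
    rw [Real.log_div (ne_of_gt hm0) (ne_of_gt hp)] at h1
    rw [Real.log_div (ne_of_gt hq0) (ne_of_gt hm0)] at h2
    have h1' : p * Real.log m - p * Real.log p ≤ m - p := by
      have := mul_le_mul_of_nonneg_left h1 hp.le
      have hc : p * (m / p - 1) = m - p := by field_simp
      rw [hc, mul_sub] at this; linarith
    have h2' : m * Real.log q - m * Real.log m ≤ q - m := by
      have := mul_le_mul_of_nonneg_left h2 hm0.le
      have hc : m * (q / m - 1) = q - m := by field_simp
      rw [hc, mul_sub] at this; linarith
    have key : m * (p * Real.log p - p * Real.log q - p + q) ≥ (p - q)^2 / 4 := by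
      nlinarith [mul_le_mul_of_nonneg_left h2' hp.le, mul_le_mul_of_nonneg_left h1' hm0.le]
    have hm1 : m ≤ 1 := by rw [hm]; linarith
    nlinarith [sq_nonneg (p - q)]

lemma sum_mul_log_prod {n m : ℕ} (a : Fin n → ℝ) (b : Fin m → ℝ)
    (ha0 : ∀ i, 0 < a i) (hb0 : ∀ j, 0 < b j) (Q : Matrix (Fin n) (Fin m) ℝ)
    (hrow : ∀ i, ∑ j, Q i j = a i) (hcol : ∀ j, ∑ i, Q i j = b j) :
    ∑ i, ∑ j, Q i j * Real.log (a i * b j)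
      = ∑ i, a i * Real.log (a i) + ∑ j, b j * Real.log (b j) := by
  have h : ∀ i j, Q i j * Real.log (a i * b j)
      = Q i j * Real.log (a i) + Q i j * Real.log (b j) := fun i j => by
    rw [Real.log_mul (ne_of_gt (ha0 i)) (ne_of_gt (hb0 j)), mul_add]
  simp_rw [h, Finset.sum_add_distrib]
  congr 1
  · simp_rw [← Finset.sum_mul]
    exact Finset.sum_congr rfl fun i _ => by rw [hrow i]
  · rw [Finset.sum_comm]
    simp_rw [← Finset.sum_mul]
    exact Finset.sum_congr rfl fun j _ => by rw [hcol j]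

/-- As ε → ∞, the unique minimizer P_ε of the entropic regularized OT problem converges
    to the product coupling a bᵀ. -/
theorem entropic_ot_limit_at_top (n m : ℕ) (a : Fin n → ℝ) (b : Fin m → ℝ)
    (C : Matrix (Fin n) (Fin m) ℝ)
    (ha0 : ∀ i, 0 < a i) (hb0 : ∀ j, 0 < b j)
    (ha1 : ∑ i, a i = 1) (hb1 : ∑ j, b j = 1)
    (P : ℝ → Matrix (Fin n) (Fin m) ℝ)
    (hmin : ∀ ε > 0, P ε ∈ couplings a b ∧
      ∀ Q ∈ couplings a b, Q ≠ P ε →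
        (∑ i, ∑ j, (P ε) i j * C i j) - ε * matEntropy (P ε) <
          (∑ i, ∑ j, Q i j * C i j) - ε * matEntropy Q) :
    Filter.Tendsto P Filter.atTop
      (nhds (fun i j => a i * b j : Matrix (Fin n) (Fin m) ℝ)) := by
  set AB : Matrix (Fin n) (Fin m) ℝ := fun i j => a i * b j with hAB
  have ha_le1 : ∀ i, a i ≤ 1 := fun i => ha1 ▸
    Finset.single_le_sum (fun i _ => (ha0 i).le) (Finset.mem_univ i)
  have hb_le1 : ∀ j, b j ≤ 1 := fun j => hb1 ▸
    Finset.single_le_sum (fun j _ => (hb0 j).le) (Finset.mem_univ j)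
  have hABrow : ∀ i, ∑ j, AB i j = a i := fun i => by
    rw [hAB]; simp only [← Finset.mul_sum, hb1, mul_one]
  have hABcol : ∀ j, ∑ i, AB i j = b j := fun j => by
    rw [hAB]; simp only [← Finset.sum_mul, ha1, one_mul]
  have hABc : AB ∈ couplings a b :=
    ⟨fun i j => (mul_pos (ha0 i) (hb0 j)).le, hABrow, hABcol⟩
  set M : ℝ := ∑ i, ∑ j, |C i j| with hM
  have hM0 : 0 ≤ M := Finset.sum_nonneg fun i _ =>
    Finset.sum_nonneg fun j _ => abs_nonneg _
  -- key quantitative bound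
  have key : ∀ ε > (0:ℝ), ∀ i j, (P ε i j - a i * b j)^2 ≤ 4 * M / ε := by
    intro ε hε i j
    obtain ⟨⟨hPnn, hProw, hPcol⟩, hopt⟩ := hmin ε hε
    have hPle1 : ∀ i j, P ε i j ≤ 1 := by
      intro i j
      calc P ε i j ≤ ∑ j', P ε i j' :=
            Finset.single_le_sum (fun j' _ => hPnn i j') (Finset.mem_univ j)
        _ = a i := hProw i
        _ ≤ 1 := ha_le1 i
    have hobj : (∑ i, ∑ j, (P ε) i j * C i j) - ε * matEntropy (P ε) ≤
        (∑ i, ∑ j, AB i j * C i j) - ε * matEntropy AB := by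
      by_cases h : AB = P ε
      · rw [h]
      · exact (hopt AB hABc h).le
    have hCb : (∑ i, ∑ j, AB i j * C i j) - (∑ i, ∑ j, (P ε) i j * C i j) ≤ M := by
      rw [← Finset.sum_sub_distrib]
      apply Finset.sum_le_sum
      intro i _
      rw [← Finset.sum_sub_distrib]
      apply Finset.sum_le_sum
      intro j _
      have habs : |AB i j - P ε i j| ≤ 1 := by
        have := hPnn i j; have := hPle1 i j
        have h1 : 0 ≤ AB i j := (mul_pos (ha0 i) (hb0 j)).le
        have h2 : AB i j ≤ 1 := by
          have := mul_le_one₀ (ha_le1 i) (hb0 j).le (hb_le1 j)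
          simpa [hAB] using this
        rw [abs_le]; constructor <;> linarith
      calc AB i j * C i j - P ε i j * C i j = (AB i j - P ε i j) * C i j := by ring
        _ ≤ |(AB i j - P ε i j) * C i j| := le_abs_self _
        _ = |AB i j - P ε i j| * |C i j| := abs_mul _ _
        _ ≤ 1 * |C i j| := mul_le_mul_of_nonneg_right habs (abs_nonneg _)
        _ = |C i j| := one_mul _
    -- entropy difference equals the KL sum
    set D : ℝ := ∑ i, ∑ j, (P ε i j * Real.log (P ε i j)
        - P ε i j * Real.log (a i * b j) - P ε i j + a i * b j) with hD
    have hsumP : ∑ i, ∑ j, P ε i j = 1 := by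
      rw [Finset.sum_congr rfl fun i _ => hProw i, ha1]
    have hsumAB : ∑ i, ∑ j, AB i j = 1 := by
      rw [Finset.sum_congr rfl fun i _ => hABrow i, ha1]
    have hlogP : ∑ i, ∑ j, P ε i j * Real.log (a i * b j)
        = ∑ i, a i * Real.log (a i) + ∑ j, b j * Real.log (b j) :=
      sum_mul_log_prod a b ha0 hb0 (P ε) hProw hPcol
    have hlogAB : ∑ i, ∑ j, AB i j * Real.log (AB i j)
        = ∑ i, a i * Real.log (a i) + ∑ j, b j * Real.log (b j) := by
      exact sum_mul_log_prod a b ha0 hb0 AB hABrow hABcol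
    have hD_eq : D = (∑ i, ∑ j, P ε i j * Real.log (P ε i j))
        - (∑ i, ∑ j, AB i j * Real.log (AB i j)) := by
      have h1 : D = (∑ i, ∑ j, P ε i j * Real.log (P ε i j))
          - (∑ i, ∑ j, P ε i j * Real.log (a i * b j))
          - (∑ i, ∑ j, P ε i j) + ∑ i, ∑ j, (a i * b j) := by
        rw [hD]
        simp only [Finset.sum_sub_distrib, Finset.sum_add_distrib]
      rw [h1, hlogP, hlogAB, hsumP]
      have h2 : ∑ i, ∑ j, (a i * b j) = (1:ℝ) := hsumAB
      rw [h2]; ring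
    have hεD : ε * D ≤ M := by
      have hent : ε * ((∑ i, ∑ j, P ε i j * Real.log (P ε i j))
          - (∑ i, ∑ j, AB i j * Real.log (AB i j))) ≤
          (∑ i, ∑ j, AB i j * C i j) - (∑ i, ∑ j, (P ε) i j * C i j) := by
        have h1 : matEntropy (P ε) = -∑ i, ∑ j, P ε i j * Real.log (P ε i j) := rfl
        have h2 : matEntropy AB = -∑ i, ∑ j, AB i j * Real.log (AB i j) := rfl
        nlinarith [hobj]
      rw [hD_eq]
      exact hent.trans hCb
    -- single term bound
    have hterm : ∀ i' j', (0:ℝ) ≤ P ε i' j' * Real.log (P ε i' j')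
        - P ε i' j' * Real.log (a i' * b j') - P ε i' j' + a i' * b j' := by
      intro i' j'
      have := kl_quad (P ε i' j') (a i' * b j') (hPnn i' j') (hPle1 i' j')
        (mul_pos (ha0 i') (hb0 j'))
        (by have := mul_le_one₀ (ha_le1 i') (hb0 j').le (hb_le1 j'); simpa using this)
      nlinarith [sq_nonneg (P ε i' j' - a i' * b j')]
    have hsingle : (P ε i j - a i * b j)^2 / 4 ≤ D := by
      have h1 := kl_quad (P ε i j) (a i * b j) (hPnn i j) (hPle1 i j)
        (mul_pos (ha0 i) (hb0 j))
        (by have := mul_le_one₀ (ha_le1 i) (hb0 j).le (hb_le1 j); simpa using this)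
      have h2 : (P ε i j * Real.log (P ε i j)
          - P ε i j * Real.log (a i * b j) - P ε i j + a i * b j) ≤ D := by
        rw [hD]
        calc _ ≤ ∑ j', (P ε i j' * Real.log (P ε i j')
              - P ε i j' * Real.log (a i * b j') - P ε i j' + a i * b j') :=
              Finset.single_le_sum (fun j' _ => hterm i j') (Finset.mem_univ j)
          _ ≤ _ := Finset.single_le_sum
              (fun i' _ => Finset.sum_nonneg fun j' _ => hterm i' j') (Finset.mem_univ i)
      linarith
    rw [le_div_iff₀ hε]
    nlinarith [mul_le_mul_of_nonneg_left hsingle hε.le, hεD]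
  -- conclude convergence
  apply tendsto_pi_nhds.mpr
  intro i
  rw [tendsto_pi_nhds]
  intro j
  rw [tendsto_iff_dist_tendsto_zero]
  have hub : Filter.Tendsto (fun ε : ℝ => Real.sqrt (4 * M / ε)) Filter.atTop (nhds 0) := by
    have h0 : Filter.Tendsto (fun ε : ℝ => 4 * M / ε) Filter.atTop (nhds 0) :=
      Filter.Tendsto.div_atTop tendsto_const_nhds Filter.tendsto_id
    have := (Real.continuous_sqrt.tendsto 0).comp h0
    simpa [Function.comp_def] using this
  apply tendsto_of_tendsto_of_tendsto_of_le_of_le' tendsto_const_nhds hub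
  · exact Filter.Eventually.of_forall fun ε => dist_nonneg
  · filter_upwards [Filter.eventually_gt_atTop (0:ℝ)] with ε hε
    have hk := key ε hε i j
    rw [Real.dist_eq]
    calc |P ε i j - a i * b j| = Real.sqrt ((P ε i j - a i * b j)^2) := by
          rw [Real.sqrt_sq_eq_abs]
      _ ≤ Real.sqrt (4 * M / ε) := Real.sqrt_le_sqrt hk
end

section
/- As ε → 0⁺, the unique minimizer P_ε of the entropic regularized OT problem converges to the element of maximal entropy within the set of optimal solutions of the unregularized OT problem; in particular ⟨P_ε, C⟩ → L_C(a,b). -/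
open Filter Topology

namespace EntropicOT

variable {n m : ℕ}

lemma cont_entry (i : Fin n) (j : Fin m) :
    Continuous (fun P : Matrix (Fin n) (Fin m) ℝ => P i j) :=
  (continuous_apply j).comp (continuous_apply i)

lemma cont_cost (C : Matrix (Fin n) (Fin m) ℝ) :
    Continuous (fun P : Matrix (Fin n) (Fin m) ℝ => ∑ i, ∑ j, P i j * C i j) := by
  refine continuous_finset_sum _ fun i _ => continuous_finset_sum _ fun j _ => ?_
  exact (cont_entry i j).mul continuous_const

lemma cont_entropy : Continuous (matEntropy (n := n) (m := m)) := by
  refine Continuous.neg ?_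
  refine continuous_finset_sum _ fun i _ => continuous_finset_sum _ fun j _ => ?_
  exact Real.continuous_mul_log.comp (cont_entry i j)

lemma couplings_isClosed (a : Fin n → ℝ) (b : Fin m → ℝ) : IsClosed (couplings a b) := by
  have h : couplings a b = (⋂ i, ⋂ j, {P : Matrix (Fin n) (Fin m) ℝ | 0 ≤ P i j}) ∩
      ((⋂ i, {P : Matrix (Fin n) (Fin m) ℝ | ∑ j, P i j = a i}) ∩
       (⋂ j, {P : Matrix (Fin n) (Fin m) ℝ | ∑ i, P i j = b j})) := by
    ext P
    simp only [couplings, Set.mem_setOf_eq, Set.mem_inter_iff, Set.mem_iInter]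
  rw [h]
  exact ((isClosed_iInter fun i => isClosed_iInter fun j =>
      isClosed_le continuous_const (cont_entry i j)).inter
    ((isClosed_iInter fun i => isClosed_eq
        (continuous_finset_sum _ fun j _ => cont_entry i j) continuous_const).inter
     (isClosed_iInter fun j => isClosed_eq
        (continuous_finset_sum _ fun i _ => cont_entry i j) continuous_const)))

lemma couplings_isCompact (a : Fin n → ℝ) (b : Fin m → ℝ)
    (ha0 : ∀ i, 0 ≤ a i) (ha1 : ∑ i, a i = 1) : IsCompact (couplings a b) := by
  have hcpt : IsCompact (Set.pi Set.univ fun _ : Fin n =>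
      Set.pi Set.univ fun _ : Fin m => Set.Icc (0:ℝ) 1) :=
    isCompact_univ_pi fun _ => isCompact_univ_pi fun _ => isCompact_Icc
  refine hcpt.of_isClosed_subset (couplings_isClosed a b) ?_
  rintro P ⟨h0, hr, -⟩
  intro i _ j _
  refine ⟨h0 i j, ?_⟩
  calc P i j ≤ ∑ j', P i j' := Finset.single_le_sum (fun j' _ => h0 i j') (Finset.mem_univ j)
    _ = a i := hr i
    _ ≤ ∑ i', a i' := Finset.single_le_sum (fun i' _ => ha0 i') (Finset.mem_univ i)
    _ = 1 := ha1


lemma couplings_convex (a : Fin n → ℝ) (b : Fin m → ℝ) : Convex ℝ (couplings a b) := by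
  rintro X ⟨h0, hr, hc⟩ Y ⟨h0', hr', hc'⟩ s t hs ht hst
  refine ⟨fun i j => ?_, fun i => ?_, fun j => ?_⟩ <;>
    simp only [Matrix.add_apply, Matrix.smul_apply, smul_eq_mul]
  · exact add_nonneg (mul_nonneg hs (h0 i j)) (mul_nonneg ht (h0' i j))
  · rw [Finset.sum_add_distrib, ← Finset.mul_sum, ← Finset.mul_sum, hr i, hr' i,
      ← add_mul, hst, one_mul]
  · rw [Finset.sum_add_distrib, ← Finset.mul_sum, ← Finset.mul_sum, hc j, hc' j,
      ← add_mul, hst, one_mul]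

lemma couplings_nonempty (a : Fin n → ℝ) (b : Fin m → ℝ)
    (ha0 : ∀ i, 0 ≤ a i) (hb0 : ∀ j, 0 ≤ b j)
    (ha1 : ∑ i, a i = 1) (hb1 : ∑ j, b j = 1) : (couplings a b).Nonempty := by
  refine ⟨fun i j => a i * b j, fun i j => mul_nonneg (ha0 i) (hb0 j), fun i => ?_, fun j => ?_⟩
  · rw [← Finset.mul_sum, hb1, mul_one]
  · rw [← Finset.sum_mul, ha1, one_mul]

lemma cost_smul_add (C : Matrix (Fin n) (Fin m) ℝ) (s t : ℝ)
    (A B : Matrix (Fin n) (Fin m) ℝ) :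
    (∑ i, ∑ j, (s • A + t • B) i j * C i j)
      = s * (∑ i, ∑ j, A i j * C i j) + t * (∑ i, ∑ j, B i j * C i j) := by
  simp only [Matrix.add_apply, Matrix.smul_apply, smul_eq_mul, add_mul, mul_assoc,
    Finset.sum_add_distrib, Finset.mul_sum]

lemma entropy_midpoint {X Y : Matrix (Fin n) (Fin m) ℝ} (hX : ∀ i j, 0 ≤ X i j)
    (hY : ∀ i j, 0 ≤ Y i j) (hne : X ≠ Y) :
    (matEntropy X + matEntropy Y) / 2
      < matEntropy ((1/2 : ℝ) • X + (1/2 : ℝ) • Y) := by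
  set g : ℝ → ℝ := fun x => x * Real.log x with hg
  have key : ∀ (p q : ℝ), 0 ≤ p → 0 ≤ q → g ((1/2) * p + (1/2) * q) ≤ g p / 2 + g q / 2 := by
    intro p q hp hq
    rcases eq_or_ne p q with h | h
    · subst h; rw [← add_mul]; norm_num
    · have := Real.strictConvexOn_mul_log.2 hp hq h (by norm_num : (0:ℝ) < 1/2)
        (by norm_num : (0:ℝ) < 1/2) (by norm_num)
      simp only [smul_eq_mul] at this
      calc g ((1/2) * p + (1/2) * q) ≤ 1/2 * g p + 1/2 * g q := this.le
        _ = g p / 2 + g q / 2 := by ring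
  have keylt : ∀ (p q : ℝ), 0 ≤ p → 0 ≤ q → p ≠ q →
      g ((1/2) * p + (1/2) * q) < g p / 2 + g q / 2 := by
    intro p q hp hq h
    have := Real.strictConvexOn_mul_log.2 hp hq h (by norm_num : (0:ℝ) < 1/2)
      (by norm_num : (0:ℝ) < 1/2) (by norm_num)
    simp only [smul_eq_mul] at this
    calc g ((1/2) * p + (1/2) * q) < 1/2 * g p + 1/2 * g q := this
      _ = g p / 2 + g q / 2 := by ring
  obtain ⟨i0, hi0⟩ : ∃ i, X i ≠ Y i := Function.ne_iff.mp hne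
  obtain ⟨j0, hj0⟩ : ∃ j, X i0 j ≠ Y i0 j := Function.ne_iff.mp hi0
  have happ : ∀ i j, ((1/2 : ℝ) • X + (1/2 : ℝ) • Y) i j = (1/2) * X i j + (1/2) * Y i j := by
    intro i j; simp [Matrix.add_apply, Matrix.smul_apply, smul_eq_mul]
  have hsum : ∑ i, ∑ j, g (((1/2 : ℝ) • X + (1/2 : ℝ) • Y) i j)
      < ∑ i, ∑ j, (g (X i j) / 2 + g (Y i j) / 2) := by
    refine Finset.sum_lt_sum (fun i _ => ?_) ⟨i0, Finset.mem_univ i0, ?_⟩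
    · refine Finset.sum_le_sum fun j _ => ?_
      rw [happ i j]; exact key _ _ (hX i j) (hY i j)
    · refine Finset.sum_lt_sum (fun j _ => ?_) ⟨j0, Finset.mem_univ j0, ?_⟩
      · rw [happ i0 j]; exact key _ _ (hX i0 j) (hY i0 j)
      · rw [happ i0 j0]; exact keylt _ _ (hX i0 j0) (hY i0 j0) hj0
  have : -∑ i, ∑ j, (g (X i j) / 2 + g (Y i j) / 2)
      < -∑ i, ∑ j, g (((1/2 : ℝ) • X + (1/2 : ℝ) • Y) i j) := by linarith
  calc (matEntropy X + matEntropy Y) / 2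
      = -∑ i, ∑ j, (g (X i j) / 2 + g (Y i j) / 2) := by
        simp only [matEntropy, hg, Finset.sum_add_distrib, ← Finset.sum_div]; ring
    _ < matEntropy ((1/2 : ℝ) • X + (1/2 : ℝ) • Y) := this

lemma mapClusterPt_mem_of_closed {α β : Type*} [TopologicalSpace β] {l : Filter α} [l.NeBot]
    {u : α → β} {x : β}
    {s : Set β} (hx : MapClusterPt x l u)
    (hs : IsClosed s) (hmem : ∀ᶠ a in l, u a ∈ s) : x ∈ s := by
  have hle : Filter.map u l ≤ Filter.principal s := Filter.le_principal_iff.mpr hmem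
  have : ClusterPt x (Filter.principal s) := hx.clusterPt.mono hle
  rw [← mem_closure_iff_clusterPt] at this
  rwa [hs.closure_eq] at this

lemma eq_of_mapClusterPt_tendsto {α β : Type*} [TopologicalSpace β] [T2Space β]
    {l : Filter α} [l.NeBot] {u : α → β} {x y : β}
    (hx : MapClusterPt x l u) (hy : Filter.Tendsto u l (nhds y)) : x = y := by
  have h1 : (nhds x ⊓ Filter.map u l).NeBot := hx.clusterPt
  have h2 : nhds x ⊓ Filter.map u l ≤ nhds x ⊓ nhds y := inf_le_inf_left _ hy
  exact t2_iff_nhds.mp inferInstance (h1.mono h2)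

end EntropicOT

open EntropicOT

/-- As ε → 0⁺, the unique minimizer P_ε of the entropic regularized OT problem converges
    to the maximal-entropy element of the set S of optimal solutions of the unregularized
    OT problem; in particular ⟨P_ε, C⟩ → L_C(a,b). -/
theorem entropic_ot_limit_at_zero (n m : ℕ) (a : Fin n → ℝ) (b : Fin m → ℝ)
    (C : Matrix (Fin n) (Fin m) ℝ) (L : ℝ)
    (ha0 : ∀ i, 0 < a i) (hb0 : ∀ j, 0 < b j)
    (ha1 : ∑ i, a i = 1) (hb1 : ∑ j, b j = 1)
    (hL : IsLeast {x : ℝ | ∃ P ∈ couplings a b, x = ∑ i, ∑ j, P i j * C i j} L)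
    (P : ℝ → Matrix (Fin n) (Fin m) ℝ)
    (hmin : ∀ ε > 0, P ε ∈ couplings a b ∧
      ∀ Q ∈ couplings a b, Q ≠ P ε →
        (∑ i, ∑ j, (P ε) i j * C i j) - ε * matEntropy (P ε) <
          (∑ i, ∑ j, Q i j * C i j) - ε * matEntropy Q) :
    ∃ Pstar ∈ couplings a b,
      (∑ i, ∑ j, Pstar i j * C i j) = L ∧
      (∀ Q ∈ couplings a b, (∑ i, ∑ j, Q i j * C i j) = L →
        matEntropy Q ≤ matEntropy Pstar) ∧
      Filter.Tendsto P (nhdsWithin 0 (Set.Ioi 0)) (nhds Pstar) ∧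
      Filter.Tendsto (fun ε => ∑ i, ∑ j, (P ε) i j * C i j)
        (nhdsWithin 0 (Set.Ioi 0)) (nhds L) := by
  classical
  set K := couplings a b with hKdef
  set f : Matrix (Fin n) (Fin m) ℝ → ℝ := fun Q => ∑ i, ∑ j, Q i j * C i j with hfdef
  have hKc : IsCompact K := couplings_isCompact a b (fun i => (ha0 i).le) ha1
  have hKcl : IsClosed K := couplings_isClosed a b
  have hKconv : Convex ℝ K := couplings_convex a b
  obtain ⟨P0, hP0K, hP0L⟩ := hL.1
  have hfL : ∀ Q ∈ K, L ≤ f Q := fun Q hQ => hL.2 ⟨Q, hQ, rfl⟩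
  set S : Set (Matrix (Fin n) (Fin m) ℝ) := {Q | Q ∈ K ∧ f Q = L} with hSdef
  have hScl : IsClosed S := hKcl.inter (isClosed_eq (cont_cost C) continuous_const)
  have hScomp : IsCompact S := hKc.of_isClosed_subset hScl fun Q hQ => hQ.1
  have hSne : S.Nonempty := ⟨P0, hP0K, hP0L.symm⟩
  obtain ⟨Pstar, hPstarS, hPstarMax⟩ :=
    hScomp.exists_isMaxOn hSne cont_entropy.continuousOn
  -- entropy bound on K
  obtain ⟨Pmax, hPmaxK, hPmaxMax⟩ := hKc.exists_isMaxOn ⟨P0, hP0K⟩ cont_entropy.continuousOn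
  set B : ℝ := matEntropy Pmax with hBdef
  -- nonstrict minimality
  have hns : ∀ ε > 0, ∀ Q ∈ K, f (P ε) - ε * matEntropy (P ε) ≤ f Q - ε * matEntropy Q := by
    intro ε hε Q hQ
    rcases eq_or_ne Q (P ε) with h | h
    · rw [h]
    · exact ((hmin ε hε).2 Q hQ h).le
  have hPK : ∀ ε > 0, P ε ∈ K := fun ε hε => (hmin ε hε).1
  have hlow : ∀ ε > 0, L ≤ f (P ε) := fun ε hε => hfL _ (hPK ε hε)
  have hup : ∀ ε > 0, f (P ε) ≤ L + ε * (B - matEntropy Pstar) := by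
    intro ε hε
    have h2 := hns ε hε Pstar hPstarS.1
    rw [hPstarS.2] at h2
    have hB : matEntropy (P ε) ≤ B := hPmaxMax (hPK ε hε)
    nlinarith [hε]
  have hHge : ∀ ε > 0, matEntropy Pstar ≤ matEntropy (P ε) := by
    intro ε hε
    have h2 := hns ε hε Pstar hPstarS.1
    rw [hPstarS.2] at h2
    have h1 := hlow ε hε
    nlinarith [hε]
  -- tendsto of cost
  have hTf : Filter.Tendsto (fun ε => f (P ε)) (nhdsWithin 0 (Set.Ioi 0)) (nhds L) := by
    have hupper : Filter.Tendsto (fun ε : ℝ => L + ε * (B - matEntropy Pstar))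
        (nhdsWithin 0 (Set.Ioi 0)) (nhds L) := by
      have : Filter.Tendsto (fun ε : ℝ => L + ε * (B - matEntropy Pstar)) (nhds 0)
          (nhds (L + 0 * (B - matEntropy Pstar))) := by
        exact (continuous_const.add (continuous_id.mul continuous_const)).tendsto 0
      simpa using this.mono_left nhdsWithin_le_nhds
    refine tendsto_of_tendsto_of_tendsto_of_le_of_le' tendsto_const_nhds hupper ?_ ?_
    · exact Filter.eventually_of_mem self_mem_nhdsWithin fun ε hε => hlow ε hε
    · exact Filter.eventually_of_mem self_mem_nhdsWithin fun ε hε => hup ε hε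
  -- every cluster point of P equals Pstar
  haveI : (nhdsWithin (0:ℝ) (Set.Ioi 0)).NeBot := nhdsGT_neBot 0
  have hmemK : ∀ᶠ ε in nhdsWithin (0:ℝ) (Set.Ioi 0), P ε ∈ K :=
    Filter.eventually_of_mem self_mem_nhdsWithin fun ε hε => hPK ε hε
  have hcluster : ∀ x, MapClusterPt x (nhdsWithin (0:ℝ) (Set.Ioi 0)) P → x = Pstar := by
    intro x hx
    have hxK : x ∈ K := mapClusterPt_mem_of_closed hx hKcl hmemK
    have hfx : f x = L := by
      have h1 : MapClusterPt (f x) (nhdsWithin (0:ℝ) (Set.Ioi 0)) (f ∘ P) :=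
        hx.continuousAt_comp (cont_cost C).continuousAt
      exact eq_of_mapClusterPt_tendsto h1 hTf
    have hHx : matEntropy Pstar ≤ matEntropy x := by
      have h1 : MapClusterPt (matEntropy x) (nhdsWithin (0:ℝ) (Set.Ioi 0)) (matEntropy ∘ P) :=
        hx.continuousAt_comp cont_entropy.continuousAt
      have h2 : (matEntropy x) ∈ Set.Ici (matEntropy Pstar) := by
        refine mapClusterPt_mem_of_closed h1 isClosed_Ici ?_
        exact Filter.eventually_of_mem self_mem_nhdsWithin fun ε hε => hHge ε hε
      exact h2
    by_contra hne
    -- midpoint contradiction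
    set Mid := (1/2 : ℝ) • x + (1/2 : ℝ) • Pstar with hMid
    have hMidK : Mid ∈ K :=
      hKconv hxK hPstarS.1 (by norm_num) (by norm_num) (by norm_num)
    have hMidL : f Mid = L := by
      rw [hfdef]
      simp only
      rw [cost_smul_add C (1/2) (1/2) x Pstar]
      have hx' : (∑ i, ∑ j, x i j * C i j) = L := hfx
      have hp' : (∑ i, ∑ j, Pstar i j * C i j) = L := hPstarS.2
      rw [hx', hp']; ring
    have hMidS : Mid ∈ S := ⟨hMidK, hMidL⟩
    have hlt : (matEntropy x + matEntropy Pstar) / 2 < matEntropy Mid :=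
      entropy_midpoint hxK.1 hPstarS.1.1 hne
    have hle : matEntropy Mid ≤ matEntropy Pstar := hPstarMax hMidS
    linarith
  -- tendsto of P
  have hTP : Filter.Tendsto P (nhdsWithin 0 (Set.Ioi 0)) (nhds Pstar) := by
    by_contra hnot
    obtain ⟨s, hs, hnmem⟩ : ∃ s ∈ nhds Pstar, P ⁻¹' s ∉ nhdsWithin (0:ℝ) (Set.Ioi 0) := by
      by_contra h
      push_neg at h
      exact hnot fun s hs => h s hs
    have hVmem : interior s ∈ nhds Pstar := interior_mem_nhds.mpr hs
    have hVnot : P ⁻¹' interior s ∉ nhdsWithin (0:ℝ) (Set.Ioi 0) := fun h =>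
      hnmem (Filter.mem_of_superset h (Set.preimage_mono interior_subset))
    have h1 : ∃ᶠ ε in nhdsWithin (0:ℝ) (Set.Ioi 0), ¬ P ε ∈ interior s :=
      Filter.not_eventually.mp hVnot
    have hfreq : ∃ᶠ ε in nhdsWithin (0:ℝ) (Set.Ioi 0),
        (¬ P ε ∈ interior s) ∧ P ε ∈ K := h1.and_eventually hmemK
    rw [Filter.frequently_iff_neBot] at hfreq
    set l' := nhdsWithin (0:ℝ) (Set.Ioi 0) ⊓
      Filter.principal {ε | (¬ P ε ∈ interior s) ∧ P ε ∈ K} with hl'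
    haveI : l'.NeBot := hfreq
    haveI : (Filter.map P l').NeBot := hfreq.map P
    have hle : Filter.map P l' ≤ Filter.principal (K \ interior s) := by
      rw [Filter.le_principal_iff, Filter.mem_map]
      exact Filter.mem_of_superset
        (Filter.mem_inf_of_right (Filter.mem_principal_self _))
        (fun ε hε => ⟨hε.2, hε.1⟩)
    obtain ⟨x, hxKV, hxCl⟩ := (hKc.diff isOpen_interior).exists_clusterPt hle
    have hxMC : MapClusterPt x (nhdsWithin (0:ℝ) (Set.Ioi 0)) P :=
      mapClusterPt_def.mpr (hxCl.mono (Filter.map_mono inf_le_left))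
    have hxeq := hcluster x hxMC
    exact hxKV.2 (hxeq ▸ mem_interior_iff_mem_nhds.mpr hs)
  exact ⟨Pstar, hPstarS.1, hPstarS.2,
    (fun Q hQK hQL => hPstarMax (⟨hQK, hQL⟩ : Q ∈ S)), hTP, hTf⟩
end
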